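/- Consider the action of SL₂(ℤ) on the 2-torus 𝕋² = ℝ²/ℤ² induced by the linear action of integer matrices on ℝ², with 𝕋² equipped with its Haar (Lebesgue) probability measure λ². Then this action is measure preserving, essentially free (for λ²-almost every z ∈ 𝕋², A·z ≠ z for every A ∈ SL₂(ℤ) with A ≠ I), and ergodic (every measurable A ⊆ 𝕋² with λ²(g·A Δ A) = 0 for all g ∈ SL₂(ℤ) satisfies λ²(A) ∈ {0,1}). -/

import Mathlib

open MeasureTheory

/-- The 2-torus `𝕋² = ℝ²/ℤ²` as a product of two unit circles `ℝ/ℤ`. -/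
abbrev Torus2 : Type := AddCircle (1 : ℝ) × AddCircle (1 : ℝ)

/-- The linear action of `SL₂(ℤ)` on the torus `𝕋² = ℝ²/ℤ²`. -/
noncomputable def sl2Act (A : Matrix.SpecialLinearGroup (Fin 2) ℤ) (p : Torus2) : Torus2 :=
  ((A : Matrix (Fin 2) (Fin 2) ℤ) 0 0 • p.1 + (A : Matrix (Fin 2) (Fin 2) ℤ) 0 1 • p.2,
   (A : Matrix (Fin 2) (Fin 2) ℤ) 1 0 • p.1 + (A : Matrix (Fin 2) (Fin 2) ℤ) 1 1 • p.2)

open Set Function Filter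

section Aux

instance : Countable (Matrix (Fin 2) (Fin 2) ℤ) := Countable.of_equiv _ (Matrix.of)
instance : Countable (Matrix.SpecialLinearGroup (Fin 2) ℤ) := Subtype.countable

instance : Measure.IsAddHaarMeasure (volume : Measure Torus2) := by
  rw [Measure.volume_eq_prod]; infer_instance

instance : IsProbabilityMeasure (volume : Measure (AddCircle (1:ℝ))) :=
  ⟨by simp [AddCircle.measure_univ]⟩

instance : NullSingletonClass (volume : Measure (AddCircle (1:ℝ))) :=
  ⟨fun y => by rw [← Metric.closedBall_zero, AddCircle.volume_closedBall]; simp⟩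

/-- The action of a `2 × 2` integer matrix on the torus. -/
noncomputable def matAct (M : Matrix (Fin 2) (Fin 2) ℤ) (p : Torus2) : Torus2 :=
  (M 0 0 • p.1 + M 0 1 • p.2, M 1 0 • p.1 + M 1 1 • p.2)

lemma sl2Act_eq (A : Matrix.SpecialLinearGroup (Fin 2) ℤ) : sl2Act A = matAct A := rfl

lemma matAct_add (M : Matrix (Fin 2) (Fin 2) ℤ) (p q : Torus2) :
    matAct M (p + q) = matAct M p + matAct M q := by
  simp only [matAct, Prod.fst_add, Prod.snd_add, smul_add, Prod.mk_add_mk, Prod.mk.injEq]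
  constructor <;> abel

lemma matAct_zero (M : Matrix (Fin 2) (Fin 2) ℤ) : matAct M 0 = 0 := by simp [matAct]

lemma matAct_mul (M N : Matrix (Fin 2) (Fin 2) ℤ) (p : Torus2) :
    matAct (M * N) p = matAct M (matAct N p) := by
  simp only [matAct, Matrix.mul_apply, Fin.sum_univ_two, add_smul, mul_smul, smul_add,
    Prod.mk.injEq]
  constructor <;> abel

lemma matAct_one (p : Torus2) : matAct 1 p = p := by
  simp [matAct, Matrix.one_apply]

lemma continuous_matAct (M : Matrix (Fin 2) (Fin 2) ℤ) : Continuous (matAct M) := by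
  unfold matAct; fun_prop

lemma sl2Act_one (p : Torus2) : sl2Act 1 p = p := by
  rw [sl2Act_eq, Matrix.SpecialLinearGroup.coe_one, matAct_one]

lemma sl2Act_mul (A B : Matrix.SpecialLinearGroup (Fin 2) ℤ) (p : Torus2) :
    sl2Act (A * B) p = sl2Act A (sl2Act B p) := by
  rw [sl2Act_eq, sl2Act_eq, sl2Act_eq, Matrix.SpecialLinearGroup.coe_mul, matAct_mul]

lemma sl2Act_leftInverse (A : Matrix.SpecialLinearGroup (Fin 2) ℤ) :
    LeftInverse (sl2Act A⁻¹) (sl2Act A) := fun p => by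
  rw [← sl2Act_mul, inv_mul_cancel, sl2Act_one]

lemma sl2Act_rightInverse (A : Matrix.SpecialLinearGroup (Fin 2) ℤ) :
    RightInverse (sl2Act A⁻¹) (sl2Act A) := fun p => by
  rw [← sl2Act_mul, mul_inv_cancel, sl2Act_one]

/-- `matAct M` bundled as an additive monoid homomorphism. -/
noncomputable def matHom (M : Matrix (Fin 2) (Fin 2) ℤ) : Torus2 →+ Torus2 where
  toFun := matAct M
  map_zero' := matAct_zero M
  map_add' := matAct_add M

lemma matAct_measurePreserving (M : Matrix (Fin 2) (Fin 2) ℤ) (hs : Surjective (matAct M)) :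
    MeasurePreserving (matAct M) (volume : Measure Torus2) volume :=
  AddMonoidHom.measurePreserving (f := matHom M) (continuous_matAct M) hs rfl

lemma sl2Act_measurePreserving (A : Matrix.SpecialLinearGroup (Fin 2) ℤ) :
    MeasurePreserving (sl2Act A) (volume : Measure Torus2) volume := by
  rw [sl2Act_eq]
  exact matAct_measurePreserving _ (sl2Act_eq A ▸ (sl2Act_rightInverse A).surjective)

/-- The homomorphism `p ↦ a • p₁ + b • p₂` from the torus to the circle. -/
noncomputable def rowHom (a b : ℤ) : Torus2 →+ AddCircle (1:ℝ) where
  toFun p := a • p.1 + b • p.2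
  map_zero' := by simp
  map_add' p q := by simp [smul_add]; abel

lemma rowHom_surjective {a b : ℤ} (h : ¬(a = 0 ∧ b = 0)) : Surjective (rowHom a b) := by
  intro t
  have hg : (Int.gcd a b : ℤ) ≠ 0 := by simpa [Int.gcd_eq_zero_iff] using h
  obtain ⟨s, hs⟩ : ∃ s : AddCircle (1:ℝ), (Int.gcd a b : ℤ) • s = t :=
    ⟨DivisibleBy.div t (Int.gcd a b : ℤ), DivisibleBy.div_cancel t hg⟩
  refine ⟨(Int.gcdA a b • s, Int.gcdB a b • s), ?_⟩
  simp only [rowHom, AddMonoidHom.coe_mk, ZeroHom.coe_mk, ← mul_smul, ← add_smul]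
  rw [← Int.gcd_eq_gcd_ab, hs]

lemma rowHom_measurePreserving {a b : ℤ} (h : ¬(a = 0 ∧ b = 0)) :
    MeasurePreserving (rowHom a b) (volume : Measure Torus2) volume := by
  refine AddMonoidHom.measurePreserving ?_ (rowHom_surjective h) ?_
  · show Continuous fun p : Torus2 => a • p.1 + b • p.2
    fun_prop
  · show (volume : Measure Torus2) univ = volume univ
    rw [Measure.volume_eq_prod, ← Set.univ_prod_univ, Measure.prod_prod]
    simp [AddCircle.measure_univ]

lemma null_line {a b : ℤ} (h : ¬(a = 0 ∧ b = 0)) :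
    volume {p : Torus2 | a • p.1 + b • p.2 = 0} = 0 := by
  have h1 : {p : Torus2 | a • p.1 + b • p.2 = 0} = (rowHom a b) ⁻¹' {0} := rfl
  rw [h1, (rowHom_measurePreserving h).measure_preimage
    (measurableSet_singleton 0).nullMeasurableSet]
  exact measure_singleton 0

lemma torsion_null :
    ∀ᵐ x ∂(volume : Measure (AddCircle (1:ℝ))), ¬IsOfFinAddOrder x := by
  have hc : Set.Countable {x : AddCircle (1:ℝ) | IsOfFinAddOrder x} := by
    have : {x : AddCircle (1:ℝ) | IsOfFinAddOrder x} ⊆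
        Set.range (fun mn : ℕ × ℕ => ((↑((mn.1 : ℝ) / (mn.2 : ℝ) * 1) : AddCircle (1:ℝ)))) := by
      intro x hx
      obtain ⟨m, -, -, he⟩ := AddCircle.exists_gcd_eq_one_of_isOfFinAddOrder hx
      exact ⟨(m, addOrderOf x), by simpa using he⟩
    exact (Set.countable_range _).mono this
  exact ae_iff.mpr (by simpa using hc.measure_zero (volume : Measure (AddCircle (1:ℝ))))

lemma denseRange_zsmul_of_infinite_order {x : AddCircle (1:ℝ)} (hx : ¬IsOfFinAddOrder x) :
    DenseRange (fun n : ℤ => n • x) := by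
  induction x using QuotientAddGroup.induction_on with
  | H r =>
  rcases AddSubgroup.dense_or_cyclic (AddSubgroup.closure {r, 1}) with hd | ⟨a, ha⟩
  · have hsub : ((↑) : ℝ → AddCircle (1:ℝ)) '' (AddSubgroup.closure {r, 1} : Set ℝ) ⊆
        Set.range (fun n : ℤ => n • ((r : AddCircle (1:ℝ)))) := by
      rintro _ ⟨y, hy, rfl⟩
      rw [SetLike.mem_coe, AddSubgroup.mem_closure_pair] at hy
      obtain ⟨m, n, rfl⟩ := hy
      refine ⟨m, ?_⟩
      show m • (r : AddCircle (1:ℝ)) = ((m • r + n • (1:ℝ) : ℝ) : AddCircle (1:ℝ))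
      rw [AddCircle.coe_add]
      norm_cast
      rw [show ((n • (1:ℝ) : ℝ) : AddCircle (1:ℝ)) = 0 from by
        rw [AddCircle.coe_zsmul, AddCircle.coe_period, smul_zero], add_zero]
      exact (AddCircle.coe_zsmul _).symm
    refine Dense.mono hsub ?_
    have hcont : Continuous ((↑) : ℝ → AddCircle (1:ℝ)) := AddCircle.continuous_mk' 1
    intro z
    induction z using QuotientAddGroup.induction_on with
    | H w =>
    have hw : w ∈ closure (AddSubgroup.closure {r, 1} : Set ℝ) := by
      rw [hd.closure_eq]; trivial
    exact image_closure_subset_closure_image hcont (mem_image_of_mem _ hw)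
  · exfalso
    have hr : r ∈ AddSubgroup.closure ({r, 1} : Set ℝ) :=
      AddSubgroup.subset_closure (by simp)
    have h1 : (1:ℝ) ∈ AddSubgroup.closure ({r, 1} : Set ℝ) :=
      AddSubgroup.subset_closure (by simp)
    rw [ha, AddSubgroup.mem_closure_singleton] at hr h1
    obtain ⟨m, hm⟩ := hr
    obtain ⟨n, hn⟩ := h1
    have hn0 : (n : ℝ) * a = 1 := by simpa [zsmul_eq_mul] using hn
    have hnne : (n : ℝ) ≠ 0 := by
      rintro h; rw [h, zero_mul] at hn0; exact one_ne_zero hn0.symm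
    apply hx
    have hreq : r = (((m : ℚ) / (n : ℚ) : ℚ) : ℝ) * 1 := by
      have hm' : (m : ℝ) * a = r := by simpa [zsmul_eq_mul] using hm
      have ha' : a = 1 / n := by field_simp; linarith [hn0]
      push_cast
      rw [← hm', ha']
      field_simp
    rw [hreq]
    rw [← addOrderOf_pos_iff, AddCircle.addOrderOf_coe_rat]
    exact Rat.den_pos _

/-- A measurable set of the torus which is a.e.-invariant under all the maps
`(x, y) ↦ (x, n • x + y)` has a.e. fibers of measure `0` or `1`. -/
lemma fiber01 (S : Set Torus2) (hm : MeasurableSet S)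
    (h : ∀ n : ℤ, (fun p : Torus2 => (p.1, n • p.1 + p.2)) ⁻¹' S =ᵐ[volume] S) :
    ∀ᵐ x ∂(volume : Measure (AddCircle (1:ℝ))),
      volume (Prod.mk x ⁻¹' S) = 0 ∨ volume (Prod.mk x ⁻¹' S) = 1 := by
  have hmeas : ∀ n : ℤ, Measurable (fun p : Torus2 => ((p.1 : AddCircle (1:ℝ)), n • p.1 + p.2)) := by
    intro n
    exact (continuous_fst.prodMk (((continuous_zsmul n).comp continuous_fst).add
      continuous_snd)).measurable
  have key : ∀ n : ℤ, ∀ᵐ x ∂(volume : Measure (AddCircle (1:ℝ))),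
      ((n • x) +ᵥ ·) ⁻¹' (Prod.mk x ⁻¹' S) =ᵐ[volume] (Prod.mk x ⁻¹' S) := by
    intro n
    have hD : volume (symmDiff ((fun p : Torus2 => (p.1, n • p.1 + p.2)) ⁻¹' S) S) = 0 :=
      measure_symmDiff_eq_zero_iff.mpr (h n)
    rw [Measure.volume_eq_prod] at hD
    have hDm : MeasurableSet (symmDiff ((fun p : Torus2 => (p.1, n • p.1 + p.2)) ⁻¹' S) S) :=
      (hm.preimage (hmeas n)).symmDiff hm
    have h2 := (Measure.measure_prod_null hDm).mp hD
    rw [Filter.EventuallyEq] at h2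
    filter_upwards [h2] with x hx
    rw [← measure_symmDiff_eq_zero_iff]
    have hset : Prod.mk x ⁻¹' (symmDiff ((fun p : Torus2 => (p.1, n • p.1 + p.2)) ⁻¹' S) S)
        = symmDiff (((n • x) +ᵥ ·) ⁻¹' (Prod.mk x ⁻¹' S)) (Prod.mk x ⁻¹' S) := by
      rw [Set.preimage_symmDiff]
      rfl
    rw [← hset]
    simpa using hx
  have hall := (ae_all_iff.mpr key).and torsion_null
  filter_upwards [hall] with x hx
  obtain ⟨hinv, htor⟩ := hx
  have hdense : Dense {g : AddCircle (1:ℝ) |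
      (g +ᵥ ·) ⁻¹' (Prod.mk x ⁻¹' S) =ᵐ[volume] (Prod.mk x ⁻¹' S)} := by
    refine Dense.mono ?_ (denseRange_zsmul_of_infinite_order htor)
    rintro _ ⟨n, rfl⟩
    exact hinv n
  have hconst := aeconst_of_dense_setOf_preimage_vadd_ae (μ := volume)
    (hm.preimage measurable_prodMk_left).nullMeasurableSet hdense
  rw [eventuallyConst_set'] at hconst
  rcases hconst with h0 | h1
  · exact Or.inl (ae_eq_empty.mp h0)
  · right
    rw [measure_congr h1]
    exact measure_univ

end Aux

/-- the action of `SL₂(ℤ)` on `𝕋²` with its Haar (Lebesgue) probability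
measure is measure preserving, essentially free and ergodic. -/
theorem stmt11 :
    (∀ A : Matrix.SpecialLinearGroup (Fin 2) ℤ,
      MeasurePreserving (sl2Act A) (volume : Measure Torus2) volume) ∧
    (∀ᵐ p ∂(volume : Measure Torus2),
      ∀ A : Matrix.SpecialLinearGroup (Fin 2) ℤ, A ≠ 1 → sl2Act A p ≠ p) ∧
    (∀ S : Set Torus2, MeasurableSet S →
      (∀ A : Matrix.SpecialLinearGroup (Fin 2) ℤ, volume (symmDiff (sl2Act A '' S) S) = 0) →
      volume S = 0 ∨ volume S = 1) := by
  refine ⟨sl2Act_measurePreserving, ?_, ?_⟩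
  · -- essential freeness
    rw [ae_all_iff]
    intro A
    by_cases hA : A = 1
    · subst hA
      exact ae_of_all _ (fun p h => absurd rfl h)
    · have hnull : volume {p : Torus2 | sl2Act A p = p} = 0 := by
        have hrow : ¬((A : Matrix (Fin 2) (Fin 2) ℤ) 0 0 - 1 = 0 ∧
              (A : Matrix (Fin 2) (Fin 2) ℤ) 0 1 = 0) ∨
            ¬((A : Matrix (Fin 2) (Fin 2) ℤ) 1 0 = 0 ∧
              (A : Matrix (Fin 2) (Fin 2) ℤ) 1 1 - 1 = 0) := by
          by_contra hc
          push_neg at hc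
          obtain ⟨⟨h00, h01⟩, h10, h11⟩ := hc
          apply hA
          apply Subtype.ext
          rw [Matrix.SpecialLinearGroup.coe_one]
          ext i j
          fin_cases i <;> fin_cases j <;>
            simp [Matrix.one_apply] <;> omega
        rcases hrow with hr | hr
        · refine measure_mono_null ?_ (null_line hr)
          intro p hp
          have h1 : (A : Matrix (Fin 2) (Fin 2) ℤ) 0 0 • p.1
              + (A : Matrix (Fin 2) (Fin 2) ℤ) 0 1 • p.2 = p.1 := congrArg Prod.fst hp
          show ((A : Matrix (Fin 2) (Fin 2) ℤ) 0 0 - 1) • p.1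
              + (A : Matrix (Fin 2) (Fin 2) ℤ) 0 1 • p.2 = 0
          rw [sub_smul, one_smul, sub_add_eq_add_sub, h1, sub_self]
        · refine measure_mono_null ?_ (null_line hr)
          intro p hp
          have h1 : (A : Matrix (Fin 2) (Fin 2) ℤ) 1 0 • p.1
              + (A : Matrix (Fin 2) (Fin 2) ℤ) 1 1 • p.2 = p.2 := congrArg Prod.snd hp
          show (A : Matrix (Fin 2) (Fin 2) ℤ) 1 0 • p.1
              + ((A : Matrix (Fin 2) (Fin 2) ℤ) 1 1 - 1) • p.2 = 0
          rw [sub_smul, one_smul, ← add_sub_assoc, h1, sub_self]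
      exact (ae_iff.mpr (by simpa using hnull)).mono fun p hp _ => hp
  · -- ergodicity
    intro S hm h
    -- the preimage of S under every element is a.e. equal to S
    have hpre : ∀ A : Matrix.SpecialLinearGroup (Fin 2) ℤ,
        sl2Act A ⁻¹' S =ᵐ[volume] S := by
      intro A
      have himg : sl2Act A⁻¹ '' S = sl2Act A ⁻¹' S :=
        congrFun (Set.image_eq_preimage_of_inverse (sl2Act_rightInverse A)
          (sl2Act_leftInverse A)) S
      have := h A⁻¹
      rw [himg] at this
      exact measure_symmDiff_eq_zero_iff.mp this
    -- shear matrices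
    have hL : ∀ n : ℤ, (fun p : Torus2 => (p.1, n • p.1 + p.2)) ⁻¹' S =ᵐ[volume] S := by
      intro n
      have he : sl2Act (⟨!![1, 0; n, 1], by simp [Matrix.det_fin_two_of]⟩ :
          Matrix.SpecialLinearGroup (Fin 2) ℤ) = fun p : Torus2 => (p.1, n • p.1 + p.2) := by
        funext p
        simp [sl2Act]
      have := hpre ⟨!![1, 0; n, 1], by simp [Matrix.det_fin_two_of]⟩
      rwa [he] at this
    have hswap_mp : MeasurePreserving (Prod.swap : Torus2 → Torus2) volume volume := by
      rw [Measure.volume_eq_prod]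
      exact Measure.measurePreserving_swap
    set S' : Set Torus2 := Prod.swap ⁻¹' S with hS'def
    have hS'm : MeasurableSet S' := hm.preimage measurable_swap
    have hL' : ∀ n : ℤ, (fun p : Torus2 => (p.1, n • p.1 + p.2)) ⁻¹' S' =ᵐ[volume] S' := by
      intro n
      have he : sl2Act (⟨!![1, n; 0, 1], by simp [Matrix.det_fin_two_of]⟩ :
          Matrix.SpecialLinearGroup (Fin 2) ℤ) = fun p : Torus2 => (p.1 + n • p.2, p.2) := by
        funext p
        simp [sl2Act]
      have hcomm : (fun p : Torus2 => (p.1, n • p.1 + p.2)) ⁻¹' S' =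
          Prod.swap ⁻¹' (sl2Act (⟨!![1, n; 0, 1], by simp [Matrix.det_fin_two_of]⟩ :
            Matrix.SpecialLinearGroup (Fin 2) ℤ) ⁻¹' S) := by
        ext p
        simp [hS'def, he, add_comm]
      rw [hcomm]
      exact hswap_mp.quasiMeasurePreserving.preimage_ae_eq
        (hpre ⟨!![1, n; 0, 1], by simp [Matrix.det_fin_two_of]⟩)
    have h1 := fiber01 S hm hL
    have h2 := fiber01 S' hS'm hL'
    -- the two "marginal" sets
    set As : Set (AddCircle (1:ℝ)) := {x | volume (Prod.mk x ⁻¹' S) = 1} with hAsdef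
    set Bs : Set (AddCircle (1:ℝ)) := {y | volume (Prod.mk y ⁻¹' S') = 1} with hBsdef
    have hAm : MeasurableSet As :=
      measurable_measure_prodMk_left hm (measurableSet_singleton 1)
    have hBm : MeasurableSet Bs :=
      measurable_measure_prodMk_left hS'm (measurableSet_singleton 1)
    -- S is a.e. equal to As ×ˢ univ
    have claim : ∀ (T : Set Torus2), MeasurableSet T →
        (∀ᵐ x ∂(volume : Measure (AddCircle (1:ℝ))),
          volume (Prod.mk x ⁻¹' T) = 0 ∨ volume (Prod.mk x ⁻¹' T) = 1) →
        T =ᵐ[volume] ({x | volume (Prod.mk x ⁻¹' T) = 1} ×ˢ univ : Set Torus2) := by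
      intro T hTm hT
      have hTAm : MeasurableSet ({x | volume (Prod.mk x ⁻¹' T) = 1} : Set (AddCircle (1:ℝ))) :=
        measurable_measure_prodMk_left hTm (measurableSet_singleton 1)
      rw [← measure_symmDiff_eq_zero_iff, Measure.volume_eq_prod,
        Measure.measure_prod_null (hTm.symmDiff (hTAm.prod MeasurableSet.univ))]
      rw [Filter.EventuallyEq]
      filter_upwards [hT] with x hx
      show volume (Prod.mk x ⁻¹' (symmDiff T ({x | volume (Prod.mk x ⁻¹' T) = 1} ×ˢ univ))) = 0
      rw [Set.preimage_symmDiff]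
      by_cases hxA : volume (Prod.mk x ⁻¹' T) = 1
      · have hset : Prod.mk x ⁻¹' (({x | volume (Prod.mk x ⁻¹' T) = 1} : Set (AddCircle (1:ℝ)))
            ×ˢ (univ : Set (AddCircle (1:ℝ)))) = univ := by
          ext y; simp [hxA]
        rw [hset, Set.top_eq_univ.symm, symmDiff_top, hnot_eq_compl,
          measure_compl (hTm.preimage measurable_prodMk_left) (measure_ne_top _ _),
          measure_univ, hxA, tsub_self]
      · have hx0 : volume (Prod.mk x ⁻¹' T) = 0 := hx.resolve_right hxA
        have hset : Prod.mk x ⁻¹' (({x | volume (Prod.mk x ⁻¹' T) = 1} : Set (AddCircle (1:ℝ)))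
            ×ˢ (univ : Set (AddCircle (1:ℝ)))) = ∅ := by
          ext y; simp [hxA]
        rw [hset, Set.bot_eq_empty.symm, symmDiff_bot]
        exact hx0
    have claimA := claim S hm h1
    have claimB := claim S' hS'm h2
    have claimB' : S =ᵐ[volume] ((univ ×ˢ Bs : Set Torus2)) := by
      have hpre' := hswap_mp.quasiMeasurePreserving.preimage_ae_eq claimB
      have e1 : Prod.swap ⁻¹' S' = S := by
        ext p; simp [hS'def]
      have e2 : Prod.swap ⁻¹' ((Bs ×ˢ (univ : Set (AddCircle (1:ℝ)))) : Set Torus2)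
          = ((univ ×ˢ Bs : Set Torus2)) := by
        ext p; simp
      rwa [e1, e2] at hpre'
    have hvolA : volume S = volume As := by
      rw [measure_congr claimA, Measure.volume_eq_prod, Measure.prod_prod, measure_univ, mul_one]
    have hvolB : volume S = volume Bs := by
      rw [measure_congr claimB', Measure.volume_eq_prod, Measure.prod_prod, measure_univ, one_mul]
    have hdiff : volume ((As ×ˢ Bsᶜ) : Set Torus2) = 0 := by
      refine measure_mono_null ?_
        (measure_symmDiff_eq_zero_iff.mpr (claimA.symm.trans claimB'))
      intro p hp
      rw [Set.mem_symmDiff]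
      obtain ⟨hp1, hp2⟩ := hp
      exact Or.inl ⟨⟨hp1, trivial⟩, fun hc => hp2 hc.2⟩
    rw [Measure.volume_eq_prod, Measure.prod_prod] at hdiff
    rcases mul_eq_zero.mp hdiff with h0 | h0
    · exact Or.inl (by rw [hvolA]; exact h0)
    · right
      rw [hvolB]
      exact (prob_compl_eq_zero_iff hBm).mp h0
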